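/- For a Tychonoff space X: if X satisfies S_fin(Γ_F, Ω) then C_p(X) satisfies S_fin(Γ_0, Ω_0) at the zero function, i.e., for every sequence (A_n) of sequences of continuous functions converging pointwise to 0, one can choose finite sets F_n ⊆ A_n such that the zero function lies in the closure of ⋃_n F_n in the topology of pointwise convergence. -/

import Mathlib

open Set Filter Topology

/-- The set of continuous real-valued functions on `X`. The ambient space
`X → ℝ` carries the product topology, i.e. the topology of pointwise
convergence, so closures and neighborhoods below are those of `C_p(X)`. -/
def Cp (X : Type*) [TopologicalSpace X] : Set (X → ℝ) := {f | Continuous f}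

/-- `A` clusters at `y` but omits `y` (the family Ω_y). -/
def OmegaAt {Y : Type*} [TopologicalSpace Y] (y : Y) (A : Set Y) : Prop :=
  y ∈ closure A ∧ y ∉ A

/-- `A` converges to `y` (the family Γ_y): infinite, omits `y`, and almost
contained in each neighborhood of `y`. -/
def GammaAt {Y : Type*} [TopologicalSpace Y] (y : Y) (A : Set Y) : Prop :=
  A.Infinite ∧ y ∉ A ∧ ∀ W ∈ 𝓝 y, (A \ W).Finite

/-- An infinite family of sets such that each point lies in all but finitely
many members. -/
def GammaFam {X : Type*} (U : Set (Set X)) : Prop :=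
  U.Infinite ∧ ∀ x : X, {u ∈ U | x ∉ u}.Finite

/-- `U` is a γ-cover of `X`. -/
def IsGammaCover {X : Type*} [TopologicalSpace X] (U : Set (Set X)) : Prop :=
  (∀ u ∈ U, IsOpen u) ∧ (univ : Set X) ∉ U ∧ GammaFam U

/-- `U` is an ω-cover of `X`: a nontrivial open cover such that every finite
subset of `X` is contained in some member. -/
def IsOmegaCover {X : Type*} [TopologicalSpace X] (U : Set (Set X)) : Prop :=
  (∀ u ∈ U, IsOpen u) ∧ (univ : Set X) ∉ U ∧
    ∀ F : Set X, F.Finite → ∃ u ∈ U, F ⊆ u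

/-- A zero-set: the preimage of `0` under a continuous real function. -/
def IsZeroSet {X : Type*} [TopologicalSpace X] (Z : Set X) : Prop :=
  ∃ f : X → ℝ, Continuous f ∧ Z = f ⁻¹' {0}

/-- A cozero-set: the complement of a zero-set. -/
def IsCozeroSet {X : Type*} [TopologicalSpace X] (U : Set X) : Prop :=
  ∃ f : X → ℝ, Continuous f ∧ U = {x | f x ≠ 0}

/-- A γ_F-shrinkable γ-cover: a γ-cover by cozero-sets admitting a zero-set
shrinking which is itself a γ-family. -/
def GammaFShrinkable {X : Type*} [TopologicalSpace X] (U : Set (Set X)) : Prop :=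
  IsGammaCover U ∧ (∀ u ∈ U, IsCozeroSet u) ∧
    ∃ F : Set X → Set X, (∀ u ∈ U, IsZeroSet (F u) ∧ F u ⊆ u) ∧ GammaFam (F '' U)

/-- `A` is 1-dense in `C_p(X)`. -/
def OneDense {X : Type*} (A : Set (X → ℝ)) : Prop :=
  ∀ x : X, ∀ W : Set ℝ, IsOpen W → W.Nonempty → ∃ f ∈ A, f x ∈ W

/-- `A` is 1-dense at the function `f`. -/
def OneDenseAt {X : Type*} (f : X → ℝ) (A : Set (X → ℝ)) : Prop :=
  ∀ x : X, ∀ ε : ℝ, 0 < ε → ∃ h ∈ A, |h x - f x| < ε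

/-- `A` is `n`-dense in `C_p(X)`. -/
def NDense {X : Type*} (n : ℕ) (A : Set (X → ℝ)) : Prop :=
  ∀ x : Fin n → X, Function.Injective x → ∀ W : Fin n → Set ℝ,
    (∀ i, IsOpen (W i) ∧ (W i).Nonempty) → ∃ f ∈ A, ∀ i, f (x i) ∈ W i


lemma zero_mem_closure_of {X : Type*} (S : Set (X → ℝ))
    (h : ∀ T : Set X, T.Finite → ∀ ε : ℝ, 0 < ε → ∃ f ∈ S, ∀ x ∈ T, |f x| < ε) :
    (0 : X → ℝ) ∈ closure S := by
  rw [mem_closure_iff_nhds]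
  intro W hW
  rw [nhds_pi, Filter.mem_pi] at hW
  obtain ⟨I, hIfin, t, ht, hsub⟩ := hW
  have hball : ∀ i, ∃ ε : ℝ, 0 < ε ∧ (i ∈ I → Metric.ball (0:ℝ) ε ⊆ t i) := by
    intro i
    by_cases hi : i ∈ I
    · obtain ⟨ε, hε, hb⟩ := Metric.mem_nhds_iff.mp (ht i)
      exact ⟨ε, hε, fun _ => hb⟩
    · exact ⟨1, one_pos, fun h' => absurd h' hi⟩
  choose ε hεpos hεb using hball
  obtain ⟨ε₀, hε₀pos, hε₀⟩ : ∃ ε₀ : ℝ, 0 < ε₀ ∧ ∀ i ∈ I, ε₀ ≤ ε i := by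
    rcases I.eq_empty_or_nonempty with rfl | hne
    · exact ⟨1, one_pos, by simp⟩
    · have hne' : hIfin.toFinset.Nonempty := by
        simpa [Set.Finite.toFinset_nonempty] using hne
      refine ⟨hIfin.toFinset.inf' hne' ε, ?_, ?_⟩
      · obtain ⟨i, hi, hEq⟩ := Finset.exists_mem_eq_inf' hne' ε
        rw [hEq]; exact hεpos i
      · intro i hi
        exact Finset.inf'_le ε (by simpa using hi)
  obtain ⟨f, hfS, hf⟩ := h I hIfin ε₀ hε₀pos
  refine ⟨f, hsub ?_, hfS⟩
  intro i hi
  apply hεb i hi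
  simp only [Metric.mem_ball, Real.dist_eq, sub_zero]
  exact lt_of_lt_of_le (hf i hi) (hε₀ i hi)

lemma gammaAt_bad_finite {X : Type*} {A : Set (X → ℝ)}
    (hA : GammaAt (0 : X → ℝ) A) (x : X) {ε : ℝ} (hε : 0 < ε) :
    {f ∈ A | ¬ |f x| < ε}.Finite := by
  have hW : {g : X → ℝ | |g x| < ε} ∈ 𝓝 (0 : X → ℝ) := by
    have hc : Continuous fun g : X → ℝ => g x := continuous_apply x
    have ho : IsOpen {g : X → ℝ | |g x| < ε} := by
      have heq : {g : X → ℝ | |g x| < ε} = (fun g : X → ℝ => g x) ⁻¹' (Metric.ball 0 ε) := by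
        ext g; simp [Real.dist_eq]
      rw [heq]; exact Metric.isOpen_ball.preimage hc
    exact ho.mem_nhds (by simp [hε])
  exact (hA.2.2 _ hW).subset (fun f hf => ⟨hf.1, hf.2⟩)

lemma exists_infinite_fiber_of {α β : Type*} {s : Set α} (hs : s.Infinite)
    {φ : α → β} (him : (φ '' s).Finite) :
    ∃ b ∈ φ '' s, {a ∈ s | φ a = b}.Infinite := by
  by_contra hcon
  push_neg at hcon
  apply hs
  have hsub : s ⊆ ⋃ b ∈ φ '' s, {a ∈ s | φ a = b} := by
    intro a ha; exact Set.mem_biUnion (Set.mem_image_of_mem φ ha) ⟨ha, rfl⟩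
  exact Set.Finite.subset (him.biUnion (fun b hb => hcon b hb)) hsub

lemma max_ne_zero_iff' (a : ℝ) : max a 0 ≠ 0 ↔ 0 < a := by
  constructor
  · intro h
    rcases lt_or_ge 0 a with h' | h'
    · exact h'
    · exact absurd (max_eq_right h') h
  · intro h
    rw [max_eq_left h.le]; exact ne_of_gt h

lemma shrinkable_of {X : Type*} [TopologicalSpace X] {A : Set (X → ℝ)} {m : ℕ}
    (hAc : A ⊆ Cp X) (hA : GammaAt (0 : X → ℝ) A)
    (hP : ¬ ∃ f ∈ A, ∀ x, |f x| < (1/2:ℝ)^m) :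
    GammaFShrinkable ((fun f : X → ℝ => {x | |f x| < (1/2:ℝ)^m}) '' A) := by
  push_neg at hP
  set φ : (X → ℝ) → Set X := fun f => {x | |f x| < (1/2:ℝ)^m} with hφ
  set U : Set (Set X) := φ '' A with hU
  have hepos : (0:ℝ) < (1/2)^m := by positivity
  have hepos' : (0:ℝ) < (1/2)^(m+1) := by positivity
  have helt : ((1:ℝ)/2)^(m+1) < (1/2)^m :=
    pow_lt_pow_right_of_lt_one₀ (by norm_num) (by norm_num) (Nat.lt_succ_self m)
  -- selection
  have hsel : ∀ u : Set X, u ∈ U → ∃ f, f ∈ A ∧ φ f = u := fun u hu => hu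
  choose! g hgA hgu using hsel
  have hginj : Set.InjOn g U := by
    intro u hu u' hu' hgeq
    rw [← hgu u hu, ← hgu u' hu', hgeq]
  -- point condition for U
  have hpt : ∀ x : X, {u ∈ U | x ∉ u}.Finite := by
    intro x
    have := (gammaAt_bad_finite hA x hepos).image φ
    refine this.subset ?_
    rintro u ⟨⟨f, hf, rfl⟩, hx⟩
    exact ⟨f, ⟨hf, hx⟩, rfl⟩
  -- U infinite
  have hUinf : U.Infinite := by
    intro hfin
    obtain ⟨u, huU, hΦ⟩ := exists_infinite_fiber_of hA.1 (hU ▸ hfin)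
    have huniv : ∀ x : X, x ∈ u := by
      intro x
      have hbad := gammaAt_bad_finite hA x hepos
      obtain ⟨f, hfd⟩ := (hΦ.diff hbad).nonempty
      simp only [Set.mem_diff, Set.mem_setOf_eq, not_and, not_not] at hfd
      obtain ⟨⟨hfA, hfu⟩, hfgood⟩ := hfd
      rw [← hfu]
      exact hfgood hfA
    obtain ⟨f0, hf0A, hf0u⟩ : ∃ f0, f0 ∈ A ∧ φ f0 = u := huU
    obtain ⟨x, hx⟩ := hP f0 hf0A
    have : x ∈ u := huniv x
    rw [← hf0u] at this
    exact absurd this.out (not_lt.mpr hx)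
  -- shrinking map
  set F : Set X → Set X := fun u => {x | |g u x| ≤ (1/2:ℝ)^(m+1)} with hF
  have hFsub : ∀ u ∈ U, F u ⊆ u := by
    intro u hu x hx
    rw [← hgu u hu]
    exact lt_of_le_of_lt hx.out helt
  have hFpt : ∀ x : X, {u ∈ U | x ∉ F u}.Finite := by
    intro x
    have hbad := gammaAt_bad_finite hA x hepos'
    refine Set.Finite.of_finite_image (hbad.subset ?_) (hginj.mono (fun u hu => hu.1))
    rintro f ⟨u, ⟨hu, hxu⟩, rfl⟩
    refine ⟨hgA u hu, ?_⟩
    intro hlt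
    exact hxu (le_of_lt hlt)
  refine ⟨⟨?_, ?_, hUinf, hpt⟩, ?_, F, ?_, ?_, ?_⟩
  · -- open
    rintro u ⟨f, hf, rfl⟩
    have hc : Continuous fun x => |f x| := (hAc hf).abs
    exact isOpen_lt hc continuous_const
  · -- univ ∉ U
    rintro ⟨f, hf, hfu⟩
    obtain ⟨x, hx⟩ := hP f hf
    have : x ∈ φ f := hfu ▸ Set.mem_univ x
    exact absurd this.out (not_lt.mpr hx)
  · -- cozero
    rintro u ⟨f, hf, rfl⟩
    refine ⟨fun x => max ((1/2:ℝ)^m - |f x|) 0, ?_, ?_⟩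
    · exact (continuous_const.sub (hAc hf).abs).max continuous_const
    · ext x
      simp only [hφ, Set.mem_setOf_eq, max_ne_zero_iff', sub_pos]
  · -- zero-set + subset
    intro u hu
    refine ⟨⟨fun x => max (|g u x| - (1/2:ℝ)^(m+1)) 0, ?_, ?_⟩, hFsub u hu⟩
    · exact ((hAc (hgA u hu)).abs.sub continuous_const).max continuous_const
    · ext x
      simp only [hF, Set.mem_setOf_eq, Set.mem_preimage, Set.mem_singleton_iff]
      rw [← not_iff_not, ← ne_eq, max_ne_zero_iff', sub_pos, not_le]
  · -- F '' U infinite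
    intro hfin
    obtain ⟨v, hvU, hΦ⟩ := exists_infinite_fiber_of hUinf hfin
    have hvuniv : ∀ x : X, x ∈ v := by
      intro x
      obtain ⟨u, hud⟩ := (hΦ.diff (hFpt x)).nonempty
      simp only [Set.mem_diff, Set.mem_setOf_eq, not_and, not_not] at hud
      obtain ⟨⟨huU, hFu⟩, hgood⟩ := hud
      rw [← hFu]
      exact hgood huU
    obtain ⟨u0, hu0Φ⟩ := hΦ.nonempty
    rw [Set.mem_setOf_eq] at hu0Φ
    obtain ⟨hu0U, hFu0⟩ := hu0Φ
    have hu0univ : ∀ x : X, x ∈ u0 := fun x => hFsub u0 hu0U (hFu0 ▸ hvuniv x)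
    obtain ⟨x, hx⟩ := hP (g u0) (hgA u0 hu0U)
    have : x ∈ u0 := hu0univ x
    rw [← hgu u0 hu0U] at this
    exact absurd this.out (not_lt.mpr hx)
  · -- point condition for F '' U
    intro x
    refine ((hFpt x).image F).subset ?_
    rintro v ⟨⟨u, hu, rfl⟩, hxv⟩
    exact ⟨u, ⟨hu, hxv⟩, rfl⟩

/-- If `X` satisfies S_fin(Γ_F, Ω), then `C_p(X)` satisfies S_fin(Γ_0, Ω_0)
at the zero function. -/
theorem stmt9 {X : Type*} [TopologicalSpace X] [T35Space X]
    (h : ∀ U : ℕ → Set (Set X), (∀ n, GammaFShrinkable (U n)) →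
      ∃ V : ℕ → Set (Set X), (∀ n, (V n).Finite ∧ V n ⊆ U n) ∧
        IsOmegaCover (⋃ n, V n)) :
    ∀ A : ℕ → Set (X → ℝ), (∀ n, A n ⊆ Cp X ∧ GammaAt (0 : X → ℝ) (A n)) →
      ∃ F : ℕ → Set (X → ℝ), (∀ n, (F n).Finite ∧ F n ⊆ A n) ∧
        (0 : X → ℝ) ∈ closure (⋃ n, F n) := by
  intro A hA
  classical
  by_cases hS : {n : ℕ | ∃ f ∈ A n, ∀ x, |f x| < (1/2:ℝ)^n}.Infinite
  · -- degenerate case: uniformly small functions exist cofinally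
    set S := {n : ℕ | ∃ f ∈ A n, ∀ x, |f x| < (1/2:ℝ)^n} with hSdef
    have hsel : ∀ n, n ∈ S → ∃ f, f ∈ A n ∧ ∀ x, |f x| < (1/2:ℝ)^n := fun n hn => by
      obtain ⟨f, hf1, hf2⟩ := hn
      exact ⟨f, hf1, hf2⟩
    choose! φ hφA hφ using hsel
    refine ⟨fun n => if n ∈ S then {φ n} else ∅, fun n => ?_, ?_⟩
    · by_cases hn : n ∈ S
      · simp only [if_pos hn]
        exact ⟨Set.finite_singleton _, by simpa using hφA n hn⟩
      · simp only [if_neg hn]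
        exact ⟨Set.finite_empty, Set.empty_subset _⟩
    · apply zero_mem_closure_of
      intro T _ ε hε
      obtain ⟨j, hj⟩ : ∃ j : ℕ, ((1:ℝ)/2)^j < ε := exists_pow_lt_of_lt_one hε (by norm_num)
      obtain ⟨n, hnS, hjn⟩ := hS.exists_gt j
      refine ⟨φ n, ?_, ?_⟩
      · refine Set.mem_iUnion.mpr ⟨n, ?_⟩
        simp [if_pos hnS]
      · intro x _
        calc |φ n x| < (1/2:ℝ)^n := hφ n hnS x
          _ ≤ (1/2:ℝ)^j := pow_le_pow_of_le_one (by norm_num) (by norm_num) hjn.le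
          _ < ε := hj
  · -- main case
    rw [Set.not_infinite] at hS
    obtain ⟨N, hN⟩ := hS.bddAbove
    have hNP : ∀ m, N + 1 ≤ m → ¬ ∃ f ∈ A m, ∀ x, |f x| < (1/2:ℝ)^m := by
      intro m hm hmem
      exact absurd (hN hmem) (by omega)
    set Un : ℕ → Set (Set X) := fun m => (fun f : X → ℝ => {x | |f x| < (1/2:ℝ)^m}) '' A m
      with hUn
    have hcov : ∀ j : ℕ, ∃ V : ℕ → Set (Set X),
        (∀ n, (V n).Finite ∧ V n ⊆ Un (N + 1 + j + n)) ∧ IsOmegaCover (⋃ n, V n) := by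
      intro j
      exact h (fun n => Un (N + 1 + j + n))
        (fun n => shrinkable_of (hA _).1 (hA _).2 (hNP _ (by omega)))
    choose V hV hVω using hcov
    have hselg : ∀ m : ℕ, ∀ u ∈ Un m, ∃ f, f ∈ A m ∧ {x | |f x| < (1/2:ℝ)^m} = u := by
      intro m u hu
      obtain ⟨f, hf, rfl⟩ := hu
      exact ⟨f, hf, rfl⟩
    choose! g hgA hgu using hselg
    refine ⟨fun n => ⋃ p ∈ {p : ℕ × ℕ | N + 1 + p.1 + p.2 = n}, g n '' V p.1 p.2,
      fun n => ⟨?_, ?_⟩, ?_⟩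
    · -- finiteness
      have hidx : {p : ℕ × ℕ | N + 1 + p.1 + p.2 = n}.Finite := by
        apply Set.Finite.subset ((Set.finite_Iic n).prod (Set.finite_Iic n))
        rintro ⟨a, b⟩ hp
        simp only [Set.mem_setOf_eq] at hp
        constructor <;> simp <;> omega
      exact hidx.biUnion (fun p _ => ((hV p.1 p.2).1.image _))
    · -- subset of A n
      rintro f hf
      simp only [Set.mem_iUnion] at hf
      obtain ⟨p, hp, u, hu, rfl⟩ := hf
      have hun : u ∈ Un n := hp ▸ (hV p.1 p.2).2 hu
      exact hgA n u hun
    · apply zero_mem_closure_of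
      intro T hT ε hε
      obtain ⟨j, hj⟩ : ∃ j : ℕ, ((1:ℝ)/2)^j < ε := exists_pow_lt_of_lt_one hε (by norm_num)
      obtain ⟨u, huV, hTu⟩ := (hVω j).2.2 T hT
      obtain ⟨k, hk⟩ := Set.mem_iUnion.mp huV
      set n := N + 1 + j + k with hn
      have hun : u ∈ Un n := (hV j k).2 hk
      refine ⟨g n u, ?_, ?_⟩
      · refine Set.mem_iUnion.mpr ⟨n, ?_⟩
        refine Set.mem_biUnion (show ((j, k) : ℕ × ℕ) ∈ _ from rfl) ?_
        exact Set.mem_image_of_mem _ hk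
      · intro x hx
        have hxu : x ∈ u := hTu hx
        rw [← hgu n u hun] at hxu
        calc |g n u x| < (1/2:ℝ)^n := hxu
          _ ≤ (1/2:ℝ)^j := pow_le_pow_of_le_one (by norm_num) (by norm_num) (by omega)
          _ < ε := hj
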